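/- Let K be a flag simplicial complex with vertex set V, |V| ≥ 3, satisfying K = core K, and assume K satisfies the separable circuit condition (SCC). Then K is not a suspension: there is no missing face ω = {i₁, i₂} of K such that every vertex v ∈ V \ ω is joined by an edge to both i₁ and i₂. -/

import Mathlib

/-- `K` is an (abstract) simplicial complex: closed under taking subsets. -/
def IsComplex {V : Type*} [DecidableEq V] (K : Set (Finset V)) : Prop :=
  ∀ σ ∈ K, ∀ τ ⊆ σ, τ ∈ K

/-- `I` is a missing face (minimal non-face) of `K`. -/
def MissingFace {V : Type*} [DecidableEq V] (K : Set (Finset V)) (I : Finset V) : Prop :=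
  I ∉ K ∧ ∀ J ⊂ I, J ∈ K

/-- `K` is flag: every missing face has exactly two elements. -/
def IsFlag {V : Type*} [DecidableEq V] (K : Set (Finset V)) : Prop :=
  ∀ I : Finset V, MissingFace K I → I.card = 2

/-- The 1-skeleton of the full subcomplex `K_I`, as a simple graph on `I`. -/
def skeletonGraph {V : Type*} [DecidableEq V] (K : Set (Finset V)) (I : Finset V) :
    SimpleGraph {x // x ∈ I} where
  Adj a b := a ≠ b ∧ ({a.1, b.1} : Finset V) ∈ K
  symm := by
    constructor
    intro a b h
    exact ⟨h.1.symm, by rw [Finset.pair_comm]; exact h.2⟩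
  loopless := by
    constructor
    intro a h
    exact h.1 rfl

/-- The full subcomplex `K_I` is a circuit (its geometric realization is `S¹`):
it is 1-dimensional, every vertex of `I` lies in exactly two edges of `K_I`, and
its 1-skeleton is connected. -/
def IsCircuit {V : Type*} [DecidableEq V] (K : Set (Finset V)) (I : Finset V) : Prop :=
  (∀ σ ∈ K, σ ⊆ I → σ.card ≤ 2) ∧
  (∀ i ∈ I, ∃ j₁ ∈ I, ∃ j₂ ∈ I, j₁ ≠ j₂ ∧ j₁ ≠ i ∧ j₂ ≠ i ∧
    ({i, j₁} : Finset V) ∈ K ∧ ({i, j₂} : Finset V) ∈ K ∧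
    ∀ j ∈ I, j ≠ i → ({i, j} : Finset V) ∈ K → j = j₁ ∨ j = j₂) ∧
  (skeletonGraph K I).Connected

/-- `K` satisfies the separable circuit condition (SCC). -/
def SCC {V : Type*} [DecidableEq V] (K : Set (Finset V)) : Prop :=
  ∀ i₁ i₂ ik : V, i₁ ≠ i₂ → ik ≠ i₁ → ik ≠ i₂ →
    MissingFace K {i₁, i₂} →
    ∃ I : Finset V, i₁ ∈ I ∧ i₂ ∈ I ∧ ik ∉ I ∧ IsCircuit K I ∧
      ¬ (skeletonGraph K (insert ik (I \ {i₁, i₂}))).Connected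

/-- A flag complex on at least three vertices with `K = core K` satisfying the SCC
is not a suspension: there is no missing face `ω = {i₁, i₂}` such that every other
vertex is joined by an edge to both `i₁` and `i₂`. -/
theorem stmt17 {V : Type*} [Fintype V] [DecidableEq V] (K : Set (Finset V))
    (hK : IsComplex K) (hcard : 3 ≤ Fintype.card V)
    (hvert : ∀ i : V, ({i} : Finset V) ∈ K)
    (hflag : IsFlag K)
    (hcore : ∀ i : V, ∃ σ ∈ K, insert i σ ∉ K)
    (hSCC : SCC K) :
    ¬ ∃ i₁ i₂ : V, i₁ ≠ i₂ ∧ MissingFace K {i₁, i₂} ∧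
      ∀ v : V, v ≠ i₁ → v ≠ i₂ →
        ({v, i₁} : Finset V) ∈ K ∧ ({v, i₂} : Finset V) ∈ K := by
  rintro ⟨i₁, i₂, hne, hmf, hsusp⟩
  -- a third vertex exists
  obtain ⟨ik, hik⟩ : ∃ ik : V, ik ∉ ({i₁, i₂} : Finset V) := by
    by_contra h
    push_neg at h
    have : (Finset.univ : Finset V) ⊆ {i₁, i₂} := fun x _ => h x
    have := Finset.card_le_card this
    simp [Finset.card_univ] at this
    have h2 : ({i₁, i₂} : Finset V).card ≤ 2 := Finset.card_insert_le _ _ |>.trans (by simp)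
    omega
  simp only [Finset.mem_insert, Finset.mem_singleton, not_or] at hik
  obtain ⟨hik1, hik2⟩ := hik
  -- first SCC application
  obtain ⟨I, hi₁I, hi₂I, -, ⟨hdim, hdeg, -⟩, -⟩ :=
    hSCC i₁ i₂ ik hne hik1 hik2 hmf
  obtain ⟨a, haI, b, hbI, hab, hai, hbi, hKa, hKb, -⟩ := hdeg i₁ hi₁I
  -- a, b ≠ i₂
  have hai₂ : a ≠ i₂ := fun h => hmf.1 (h ▸ hKa)
  have hbi₂ : b ≠ i₂ := fun h => hmf.1 (h ▸ hKb)
  -- {a, b} ∉ K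
  have habK : ({a, b} : Finset V) ∉ K := by
    intro habK
    -- the triangle {i₁, a, b} is not in K by the circuit dimension bound
    have htri_sub : ({i₁, a, b} : Finset V) ⊆ I := by
      intro x hx
      simp only [Finset.mem_insert, Finset.mem_singleton] at hx
      rcases hx with rfl | rfl | rfl <;> assumption
    have htri_card : ({i₁, a, b} : Finset V).card = 3 := by
      rw [Finset.card_insert_of_notMem (by simp [Ne.symm hai, Ne.symm hbi]),
        Finset.card_insert_of_notMem (by simp [hab]), Finset.card_singleton]
    have htriK : ({i₁, a, b} : Finset V) ∉ K := fun h => by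
      have := hdim _ h htri_sub
      omega
    -- it's not a missing face since card = 3
    have hnotmf : ¬ MissingFace K {i₁, a, b} := fun h => by
      have := hflag _ h
      omega
    rw [MissingFace] at hnotmf
    push_neg at hnotmf
    obtain ⟨J, hJss, hJK⟩ := hnotmf htriK
    -- but every proper subset of the triangle IS in K
    obtain ⟨x, hxtri, hxJ⟩ := Finset.exists_of_ssubset hJss
    apply hJK
    have hJsub : ∀ P : Finset V, P ∈ K → J ⊆ P ∪ {x} → J ∈ K := by
      intro P hP hJP
      refine hK P hP J ?_
      intro y hy
      rcases Finset.mem_union.mp (hJP hy) with h | h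
      · exact h
      · exact absurd (Finset.mem_singleton.mp h ▸ hy) hxJ
    have hJtri : J ⊆ ({i₁, a, b} : Finset V) := hJss.subset
    have key : ∀ y ∈ J, y ≠ x → y ∈ ({i₁, a, b} : Finset V) := fun y hy _ => hJtri hy
    simp only [Finset.mem_insert, Finset.mem_singleton] at hxtri
    have hKi₁a : ({i₁, a} : Finset V) ∈ K := by rw [Finset.pair_comm]; exact (hsusp a hai hai₂).1
    have hKi₁b : ({i₁, b} : Finset V) ∈ K := by rw [Finset.pair_comm]; exact (hsusp b hbi hbi₂).1
    rcases hxtri with rfl | rfl | rfl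
    · exact hK _ habK J (fun y hy => by
        rcases Finset.mem_insert.mp (hJtri hy) with rfl | h
        · exact absurd hy hxJ
        · exact h)
    · refine hK _ hKi₁b J (fun y hy => ?_)
      rcases Finset.mem_insert.mp (hJtri hy) with rfl | h
      · simp
      · rcases Finset.mem_insert.mp h with rfl | h
        · exact absurd hy hxJ
        · simp [Finset.mem_singleton.mp h]
    · refine hK _ hKi₁a J (fun y hy => ?_)
      rcases Finset.mem_insert.mp (hJtri hy) with rfl | h
      · simp
      · rcases Finset.mem_insert.mp h with rfl | h
        · simp
        · exact absurd (Finset.mem_singleton.mp h ▸ hy) hxJ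
  -- {a, b} is a missing face
  have hmf' : MissingFace K ({a, b} : Finset V) := by
    refine ⟨habK, fun J hJ => ?_⟩
    obtain ⟨x, hxab, hxJ⟩ := Finset.exists_of_ssubset hJ
    simp only [Finset.mem_insert, Finset.mem_singleton] at hxab
    rcases hxab with rfl | rfl
    · refine hK {b} (hvert b) J (fun y hy => ?_)
      rcases Finset.mem_insert.mp (hJ.subset hy) with rfl | h
      · exact absurd hy hxJ
      · exact h
    · refine hK {a} (hvert a) J (fun y hy => ?_)
      rcases Finset.mem_insert.mp (hJ.subset hy) with rfl | h
      · simp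
      · exact absurd (Finset.mem_singleton.mp h ▸ hy) hxJ
  -- second SCC application with third vertex i₁
  obtain ⟨I', haI', hbI', hi₁I', ⟨-, hdeg', -⟩, hdisc⟩ :=
    hSCC a b i₁ hab (Ne.symm hai) (Ne.symm hbi) hmf'
  apply hdisc
  -- find v ∈ I' \ {a, b}, v ≠ i₁, v ≠ i₂: a neighbor of a in the circuit I'
  obtain ⟨j₁, hj₁I', j₂, hj₂I', hj12, hj₁a, hj₂a, hKj₁, hKj₂, -⟩ := hdeg' a haI'
  have hj₁b : j₁ ≠ b := fun h => habK (h ▸ hKj₁)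
  have hj₂b : j₂ ≠ b := fun h => habK (h ▸ hKj₂)
  obtain ⟨v, hvI', hva, hvb, hvi₂, hKav⟩ :
      ∃ v, v ∈ I' ∧ v ≠ a ∧ v ≠ b ∧ v ≠ i₂ ∧ ({a, v} : Finset V) ∈ K := by
    by_cases h : j₁ = i₂
    · exact ⟨j₂, hj₂I', hj₂a, hj₂b, fun hh => hj12 (h.trans hh.symm), hKj₂⟩
    · exact ⟨j₁, hj₁I', hj₁a, hj₁b, h, hKj₁⟩
  have hvi₁ : v ≠ i₁ := fun h => hi₁I' (h ▸ hvI')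
  -- the set J' = insert i₁ (I' \ {a,b})
  set J' : Finset V := insert i₁ (I' \ {a, b}) with hJ'
  have hi₁J' : i₁ ∈ J' := Finset.mem_insert_self _ _
  have hvJ' : v ∈ J' := Finset.mem_insert_of_mem (Finset.mem_sdiff.mpr ⟨hvI', by simp [hva, hvb]⟩)
  -- show the skeleton graph on J' is connected
  haveI : Nonempty {x // x ∈ J'} := ⟨⟨i₁, hi₁J'⟩⟩
  refine ⟨fun u u' => ?_⟩
  set t : {x // x ∈ J'} := ⟨i₁, hi₁J'⟩ with ht
  set w : {x // x ∈ J'} := ⟨v, hvJ'⟩ with hw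
  have hwt : (skeletonGraph K J').Adj w t := by
    refine ⟨fun h => hvi₁ (congrArg Subtype.val h), ?_⟩
    exact (hsusp v hvi₁ hvi₂).1
  have key : ∀ z : {x // x ∈ J'}, (skeletonGraph K J').Reachable z t := by
    intro z
    rcases Finset.mem_insert.mp z.2 with hz | hz
    · have : z = t := Subtype.ext hz
      rw [this]
    · obtain ⟨hzI', hzab⟩ := Finset.mem_sdiff.mp hz
      simp only [Finset.mem_insert, Finset.mem_singleton, not_or] at hzab
      have hzi₁ : z.1 ≠ i₁ := fun h => hi₁I' (h ▸ hzI')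
      by_cases hzi₂ : z.1 = i₂
      · -- z = i₂: connect through v
        have hzw : (skeletonGraph K J').Adj z w := by
          refine ⟨fun h => hvi₂ ((congrArg Subtype.val h).symm.trans hzi₂), ?_⟩
          rw [hzi₂, Finset.pair_comm]
          exact (hsusp v hvi₁ hvi₂).2
        exact (hzw.reachable).trans hwt.reachable
      · exact SimpleGraph.Adj.reachable ⟨fun h => hzi₁ (congrArg Subtype.val h),
          (hsusp z.1 hzi₁ hzi₂).1⟩
  exact (key u).trans (key u').symm
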